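/- Let d ≥ 3 be an integer, q = 2d/(d-2), θ = q - 2, and let M > 0, γ ∈ (0,M]. Define for r ≥ -1 the pieces r₁ = min(r,γ), r₂ = min(max(r-γ,0), M-γ), r₃ = max(r-M,0). If r ≤ γ then (1+r)^q - 1 - q·r ≤ (1/2)·q·(q-1)·r₁² + (3/2)·γ·θ·r₁², provided 2 ≤ q ≤ 3. -/

import Mathlib

private lemma aux_mono {f f' : ℝ → ℝ} (hf : ∀ x, HasDerivAt f (f' x) x)
    {a b : ℝ} (hab : a ≤ b) (h : ∀ x ∈ Set.Icc a b, 0 ≤ f' x) : f a ≤ f b := by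
  have hmono : MonotoneOn f (Set.Icc a b) := by
    apply monotoneOn_of_deriv_nonneg (convex_Icc a b)
    · exact fun x _ => (hf x).continuousAt.continuousWithinAt
    · intro x hx
      exact (hf x).differentiableAt.differentiableWithinAt
    · intro x hx
      rw [(hf x).deriv]
      exact h x (interior_subset hx)
  exact hmono (Set.left_mem_Icc.2 hab) (Set.right_mem_Icc.2 hab) hab

private lemma hasDerivAt_one_add_rpow (q : ℝ) (hq : 1 ≤ q) (x : ℝ) :
    HasDerivAt (fun x : ℝ => (1 + x) ^ q) (q * (1 + x) ^ (q - 1)) x := by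
  have h1 : HasDerivAt (fun x : ℝ => 1 + x) 1 x := by
    simpa using (hasDerivAt_id x).const_add 1
  have h2 := (Real.hasDerivAt_rpow_const (x := 1 + x) (p := q) (Or.inr hq)).comp x h1
  rw [mul_one] at h2
  exact h2

theorem cutting_estimate_small_range (d : ℕ) (hd : 3 ≤ d)
    (q θ M γ r : ℝ)
    (hq : q = 2 * d / (d - 2)) (hθ : θ = q - 2)
    (hM : 0 < M) (hγ0 : 0 < γ) (hγM : γ ≤ M)
    (hr : -1 ≤ r) (hrγ : r ≤ γ)
    (hq2 : 2 ≤ q) (hq3 : q ≤ 3) :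
    (1 + r) ^ q - 1 - q * r
      ≤ (1 / 2) * q * (q - 1) * (min r γ) ^ 2
        + (3 / 2) * γ * θ * (min r γ) ^ 2 := by
  subst hθ
  have hθ0 : 0 ≤ q - 2 := by linarith
  have hθ1 : q - 2 ≤ 1 := by linarith
  have hq1 : (1 : ℝ) ≤ q := by linarith
  rw [min_eq_left hrγ]
  rcases le_or_gt r 0 with hr0 | hr0
  · -- case r ≤ 0 : show (1+r)^q ≤ 1 + q r + q(q-1)/2 r²
    have key : 1 + q * r + q * (q - 1) / 2 * r ^ 2 - (1 + r) ^ q ≥ 0 := by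
      set f : ℝ → ℝ := fun x => -(1 + q * x + q * (q - 1) / 2 * x ^ 2 - (1 + x) ^ q) with hf
      have hderiv : ∀ x : ℝ,
          HasDerivAt f (-(q + q * (q - 1) * x - q * (1 + x) ^ (q - 1))) x := by
        intro x
        have h1 : HasDerivAt (fun x : ℝ => 1 + q * x + q * (q - 1) / 2 * x ^ 2 - (1 + x) ^ q)
            (q + q * (q - 1) * x - q * (1 + x) ^ (q - 1)) x := by
          have ha : HasDerivAt (fun x : ℝ => 1 + q * x + q * (q - 1) / 2 * x ^ 2)
              (q + q * (q - 1) * x) x := by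
            have := (((hasDerivAt_id x).const_mul q).const_add 1).add
              (((hasDerivAt_pow 2 x)).const_mul (q * (q - 1) / 2))
            refine this.congr_deriv ?_
            ring
          have := ha.sub (hasDerivAt_one_add_rpow q hq1 x)
          exact this
        exact h1.neg
      have h0 : f r ≤ f 0 := by
        apply aux_mono hderiv hr0
        intro x hx
        obtain ⟨hxr, hx0⟩ := hx
        have hx1 : -1 ≤ x := le_trans hr hxr
        have hb : 1 + (q - 1) * x ≤ (1 + x) ^ (q - 1) :=
          one_add_mul_self_le_rpow_one_add hx1 (by linarith)
        have := mul_le_mul_of_nonneg_left hb (by linarith : (0:ℝ) ≤ q)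
        simp only [neg_sub]
        nlinarith
      have hf0 : f 0 = 0 := by
        simp [hf, Real.one_rpow]
      have := h0.trans_eq hf0
      simp only [hf] at this
      linarith
    nlinarith [sq_nonneg r, mul_nonneg (mul_nonneg hγ0.le hθ0) (sq_nonneg r)]
  · -- case 0 < r ≤ γ
    have key : 1 + q * r + q * (q - 1) / 2 * r ^ 2 + (q - 2) * r ^ 3 - (1 + r) ^ q ≥ 0 := by
      set f : ℝ → ℝ := fun x =>
        1 + q * x + q * (q - 1) / 2 * x ^ 2 + (q - 2) * x ^ 3 - (1 + x) ^ q with hf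
      have hderiv : ∀ x : ℝ,
          HasDerivAt f (q + q * (q - 1) * x + 3 * (q - 2) * x ^ 2 - q * (1 + x) ^ (q - 1)) x := by
        intro x
        have ha : HasDerivAt (fun x : ℝ => 1 + q * x + q * (q - 1) / 2 * x ^ 2 + (q - 2) * x ^ 3)
            (q + q * (q - 1) * x + 3 * (q - 2) * x ^ 2) x := by
          have := ((((hasDerivAt_id x).const_mul q).const_add 1).add
            (((hasDerivAt_pow 2 x)).const_mul (q * (q - 1) / 2))).add
            (((hasDerivAt_pow 3 x)).const_mul (q - 2))
          refine this.congr_deriv ?_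
          ring
        have := ha.sub (hasDerivAt_one_add_rpow q hq1 x)
        exact this
      have h0 : f 0 ≤ f r := by
        apply aux_mono hderiv hr0.le
        intro x hx
        obtain ⟨hx0, hxr⟩ := hx
        have hx1 : (0:ℝ) < 1 + x := by linarith
        have hsplit : (1 + x) ^ (q - 1) = (1 + x) * (1 + x) ^ (q - 2) := by
          have : (1 + x) ^ (q - 1) = (1 + x) ^ ((1:ℝ) + (q - 2)) := by congr 1; ring
          rw [this, Real.rpow_add hx1, Real.rpow_one]
        have hb : (1 + x) ^ (q - 2) ≤ 1 + (q - 2) * x :=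
          rpow_one_add_le_one_add_mul_self (by linarith) hθ0 hθ1
        have hle : (1 + x) ^ (q - 1) ≤ (1 + x) * (1 + (q - 2) * x) := by
          rw [hsplit]
          exact mul_le_mul_of_nonneg_left hb (by linarith)
        have := mul_le_mul_of_nonneg_left hle (by linarith : (0:ℝ) ≤ q)
        nlinarith [mul_nonneg (mul_nonneg hθ0 (sq_nonneg x)) (by linarith : (0:ℝ) ≤ 3 - q)]
      have hf0 : f 0 = 0 := by
        simp [hf, Real.one_rpow]
      have := hf0 ▸ h0
      simp only [hf] at this ⊢
      linarith
    have hcube : (q - 2) * r ^ 3 ≤ (q - 2) * γ * r ^ 2 := by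
      nlinarith [mul_nonneg hθ0 (sq_nonneg r)]
    nlinarith [mul_nonneg (mul_nonneg hγ0.le hθ0) (sq_nonneg r)]
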